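/- Let k be a rational number such that the Weierstrass curve U_k : Y^2 + (k-2)XY + kY = X^3 (with coefficients a₁ = k-2, a₂ = 0, a₃ = k, a₄ = 0, a₆ = 0) is nonsingular, i.e., has nonzero discriminant. Then the point P = (k, k) lies on U_k, and in the group of points of U_k one has 6 • P = O (P is a torsion point of order dividing 6), while P ≠ O. -/

import Mathlib

open WeierstrassCurve

private lemma some_eq_some_aux {W : WeierstrassCurve.Affine ℚ} {x₁ y₁ x₂ y₂ : ℚ}
    (h₁ : W.Nonsingular x₁ y₁) (h₂ : W.Nonsingular x₂ y₂) (hx : x₁ = x₂) (hy : y₁ = y₂) :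
    WeierstrassCurve.Affine.Point.some _ _ h₁ = WeierstrassCurve.Affine.Point.some _ _ h₂ := by
  subst hx; subst hy; rfl

/-- On the nonsingular Weierstrass curve `U_k : Y² + (k-2)XY + kY = X³` over `ℚ`, the point
`P = (k, k)` lies on the curve and is a nonzero torsion point with `6 • P = 0`. -/
theorem P_is_six_torsion_on_Uk (k : ℚ)
    (U : WeierstrassCurve.Affine ℚ)
    (hU : U = { a₁ := k - 2, a₂ := 0, a₃ := k, a₄ := 0, a₆ := 0 })
    (hΔ : U.Δ ≠ 0) :
    ∃ h : U.Nonsingular k k,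
      6 • (WeierstrassCurve.Affine.Point.some _ _ h) = (0 : U.Point) ∧
        WeierstrassCurve.Affine.Point.some _ _ h ≠ (0 : U.Point) := by
  subst hU
  set W : WeierstrassCurve.Affine ℚ :=
    { a₁ := k - 2, a₂ := 0, a₃ := k, a₄ := 0, a₆ := 0 } with hW
  have ha₁ : W.a₁ = k - 2 := rfl
  have ha₂ : W.a₂ = 0 := rfl
  have ha₃ : W.a₃ = k := rfl
  have ha₄ : W.a₄ = 0 := rfl
  have ha₆ : W.a₆ = 0 := rfl
  have hΔeq : W.Δ = k ^ 3 * (k + 1) ^ 2 * (k - 8) := by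
    simp only [WeierstrassCurve.Δ, WeierstrassCurve.b₂, WeierstrassCurve.b₄,
      WeierstrassCurve.b₆, WeierstrassCurve.b₈, ha₁, ha₂, ha₃, ha₄, ha₆]
    ring
  have hΔ' : k ^ 3 * (k + 1) ^ 2 * (k - 8) ≠ 0 := hΔeq ▸ hΔ
  have hk0 : k ≠ 0 := fun h => hΔ' (by rw [h]; ring)
  have hk1 : k + 1 ≠ 0 := fun h => hΔ' (by rw [show k = -1 by linarith]; ring)
  -- P = (k, k) is on the curve
  have heq : W.Equation k k := by
    rw [WeierstrassCurve.Affine.equation_iff, ha₁, ha₂, ha₃, ha₄, ha₆]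
    ring
  have h : W.Nonsingular k k :=
    (WeierstrassCurve.Affine.equation_iff_nonsingular_of_Δ_ne_zero (W := W) hΔ).mp heq
  refine ⟨h, ?_, WeierstrassCurve.Affine.Point.some_ne_zero h⟩
  -- negY at P
  have hnegY : W.negY k k = -k ^ 2 := by
    rw [WeierstrassCurve.Affine.negY, ha₁, ha₃]; ring
  have hy1 : (k : ℚ) ≠ W.negY k k := by
    rw [hnegY]
    intro hc
    apply hk0
    have : k * (k + 1) = 0 := by linarith [hc]
    rcases mul_eq_zero.mp this with h' | h'
    · exact h'
    · exact absurd h' hk1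
  -- slope at P is 2
  have hs1 : W.slope k k k k = 2 := by
    rw [WeierstrassCurve.Affine.slope_of_Y_ne rfl hy1, hnegY, ha₁, ha₂, ha₄]
    rw [div_eq_iff (by rw [← hnegY]; exact sub_ne_zero.mpr hy1)]
    ring
  -- 2P = (0, 0)
  have hx2 : W.addX k k (W.slope k k k k) = 0 := by
    rw [hs1, WeierstrassCurve.Affine.addX, ha₁, ha₂]; ring
  have hy2 : W.addY k k k (W.slope k k k k) = 0 := by
    rw [WeierstrassCurve.Affine.addY, WeierstrassCurve.Affine.negAddY, hx2, hs1,
      WeierstrassCurve.Affine.negY, ha₁, ha₃]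
    ring
  have h2 : W.Nonsingular 0 0 := by
    have := WeierstrassCurve.Affine.nonsingular_add h h (fun hxy => hy1 hxy.2)
    rwa [hx2, hy2] at this
  have e1 : WeierstrassCurve.Affine.Point.some _ _ h + WeierstrassCurve.Affine.Point.some _ _ h =
      WeierstrassCurve.Affine.Point.some _ _ h2 :=
    (WeierstrassCurve.Affine.Point.add_of_Y_ne hy1).trans
      (some_eq_some_aux _ h2 hx2 hy2)
  -- 3P = 2P + P = (-1, -1)
  have hx0k : (0 : ℚ) ≠ k := fun h' => hk0 h'.symm
  have hs2 : W.slope 0 k 0 k = 1 := by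
    rw [WeierstrassCurve.Affine.slope_of_X_ne hx0k]
    field_simp
  have hx3 : W.addX 0 k (W.slope 0 k 0 k) = -1 := by
    rw [hs2, WeierstrassCurve.Affine.addX, ha₁, ha₂]; ring
  have hy3 : W.addY 0 k 0 (W.slope 0 k 0 k) = -1 := by
    rw [WeierstrassCurve.Affine.addY, WeierstrassCurve.Affine.negAddY, hx3, hs2,
      WeierstrassCurve.Affine.negY, ha₁, ha₃]
    ring
  have h3 : W.Nonsingular (-1) (-1) := by
    have := WeierstrassCurve.Affine.nonsingular_add h2 h (fun hx => absurd hx.1 hx0k)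
    rwa [hx3, hy3] at this
  have e2 : WeierstrassCurve.Affine.Point.some _ _ h2 + WeierstrassCurve.Affine.Point.some _ _ h =
      WeierstrassCurve.Affine.Point.some _ _ h3 :=
    (WeierstrassCurve.Affine.Point.add_of_X_ne hx0k).trans
      (some_eq_some_aux _ h3 hx3 hy3)
  -- 3P is 2-torsion
  have e3 : WeierstrassCurve.Affine.Point.some _ _ h3 + WeierstrassCurve.Affine.Point.some _ _ h3 = 0 :=
    WeierstrassCurve.Affine.Point.add_self_of_Y_eq
      (by rw [WeierstrassCurve.Affine.negY, ha₁, ha₃]; ring)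
  -- put it together
  set P := WeierstrassCurve.Affine.Point.some _ _ h with hP
  have t2 : 2 • P = WeierstrassCurve.Affine.Point.some _ _ h2 := by rw [two_smul, e1]
  have t3 : 3 • P = WeierstrassCurve.Affine.Point.some _ _ h3 := by
    rw [show (3 : ℕ) = 2 + 1 from rfl, add_smul, one_smul, t2, e2]
  calc 6 • P = 2 • (3 • P) := by rw [show (6 : ℕ) = 2 * 3 from rfl, mul_smul]
    _ = 3 • P + 3 • P := two_smul _ _
    _ = 0 := by rw [t3, e3]
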